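/- Let y ∈ ℝ³ be a unit vector and c₁, c₂, c₃ real constants with c₁ > 0, c₃ > 0 and c₁ c₃ > c₂². Then the 6×6 matrix M = [[c₃ I₃, c₂ [y]_×],[−c₂ [y]_×, c₁ I₃]] satisfies M ≥ λ_M I₆ with λ_M = (c₁ c₃ − c₂²)/(c₁ + c₃) > 0; in particular M is positive definite. -/

import Mathlib

open Matrix

noncomputable section

/-- The skew-symmetric matrix `[y]_×` associated with `y ∈ ℝ³`, so that `[y]_× v = y × v`. -/
def skew (y : Fin 3 → ℝ) : Matrix (Fin 3) (Fin 3) ℝ :=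
  !![0, -y 2, y 1; y 2, 0, -y 0; -y 1, y 0, 0]

lemma cs3 (a b c d e f : ℝ) : (a*d+b*e+c*f)^2 ≤ (a^2+b^2+c^2)*(d^2+e^2+f^2) := by
  nlinarith [sq_nonneg (a*e-b*d), sq_nonneg (a*f-c*d), sq_nonneg (b*f-c*e)]

lemma key (p q c s A B : ℝ) (hp : 0 < p) (hq : 0 < q) (hpq : c^2 ≤ p*q)
    (hs : s^2 ≤ A*B) (hA : 0 ≤ A) (hB : 0 ≤ B) : 0 ≤ p*A + q*B + 2*c*s := by
  by_contra h
  push_neg at h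
  have h1 : 0 ≤ p*A + q*B := by positivity
  have h2 : (p*A+q*B)*(p*A+q*B) < (-(2*c*s))*(-(2*c*s)) :=
    mul_self_lt_mul_self h1 (by linarith)
  have h3 : c^2*s^2 ≤ p*q*s^2 := mul_le_mul_of_nonneg_right hpq (sq_nonneg s)
  have h4 : p*q*s^2 ≤ p*q*(A*B) :=
    mul_le_mul_of_nonneg_left hs (by positivity)
  nlinarith [sq_nonneg (p*A-q*B)]

set_option maxHeartbeats 1000000 in
theorem stmt11
    (y : Fin 3 → ℝ) (hy : y ⬝ᵥ y = 1)
    (c1 c2 c3 : ℝ) (hc1 : 0 < c1) (hc3 : 0 < c3) (hdet : c1 * c3 > c2 ^ 2) :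
    0 < (c1 * c3 - c2 ^ 2) / (c1 + c3) ∧
    ((Matrix.fromBlocks (c3 • 1) (c2 • skew y) ((-c2) • skew y) (c1 • 1)
        : Matrix (Fin 3 ⊕ Fin 3) (Fin 3 ⊕ Fin 3) ℝ) -
      ((c1 * c3 - c2 ^ 2) / (c1 + c3)) • 1).PosSemidef ∧
    (Matrix.fromBlocks (c3 • 1) (c2 • skew y) ((-c2) • skew y) (c1 • 1)
        : Matrix (Fin 3 ⊕ Fin 3) (Fin 3 ⊕ Fin 3) ℝ).PosDef := by
  have hy' : y 0 ^ 2 + y 1 ^ 2 + y 2 ^ 2 = 1 := by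
    simpa [dotProduct, Fin.sum_univ_three, sq] using hy
  have hc13 : (0:ℝ) < c1 + c3 := by linarith
  set lam : ℝ := (c1 * c3 - c2 ^ 2) / (c1 + c3) with hlam
  clear_value lam
  have hlampos : 0 < lam := hlam ▸ div_pos (by linarith) hc13
  have hp : 0 < c3 - lam := by
    have : c3 - lam = (c3^2 + c2^2) / (c1 + c3) := by
      rw [hlam]; field_simp; ring
    rw [this]; positivity
  have hq : 0 < c1 - lam := by
    have : c1 - lam = (c1^2 + c2^2) / (c1 + c3) := by
      rw [hlam]; field_simp; ring
    rw [this]; positivity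
  have hpq : c2^2 ≤ (c3 - lam) * (c1 - lam) := by
    have h5 : (c3 - lam) * (c1 - lam) = c2^2 + lam^2 := by
      rw [hlam]; field_simp; ring
    nlinarith [sq_nonneg lam]
  set M : Matrix (Fin 3 ⊕ Fin 3) (Fin 3 ⊕ Fin 3) ℝ :=
    Matrix.fromBlocks (c3 • 1) (c2 • skew y) ((-c2) • skew y) (c1 • 1) with hM
  have hherm : M.IsHermitian := by
    rw [Matrix.IsHermitian]
    ext i j
    rcases i with i | i <;> rcases j with j | j <;>
      fin_cases i <;> fin_cases j <;>
      simp [hM, skew, Matrix.conjTranspose_apply, Matrix.one_apply]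
  have hpsd : (M - lam • 1).PosSemidef := by
    rw [Matrix.posSemidef_iff_dotProduct_mulVec]
    constructor
    · exact hherm.sub (by simp [Matrix.IsHermitian])
    · intro x
      have hform : star x ⬝ᵥ (M - lam • 1) *ᵥ x =
          (c3 - lam) * (x (Sum.inl 0)^2 + x (Sum.inl 1)^2 + x (Sum.inl 2)^2)
          + (c1 - lam) * (x (Sum.inr 0)^2 + x (Sum.inr 1)^2 + x (Sum.inr 2)^2)
          + 2 * c2 * (x (Sum.inl 0) * (y 1 * x (Sum.inr 2) - y 2 * x (Sum.inr 1))
            + x (Sum.inl 1) * (y 2 * x (Sum.inr 0) - y 0 * x (Sum.inr 2))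
            + x (Sum.inl 2) * (y 0 * x (Sum.inr 1) - y 1 * x (Sum.inr 0))) := by
        simp [hM, dotProduct, Matrix.mulVec, Matrix.sub_apply, Matrix.smul_apply,
          Matrix.one_apply, Fintype.sum_sum_type, Fin.sum_univ_three, skew,
          Matrix.fromBlocks_apply₁₁, Matrix.fromBlocks_apply₁₂,
          Matrix.fromBlocks_apply₂₁, Matrix.fromBlocks_apply₂₂]
        ring
      rw [hform]
      set u0 := x (Sum.inl 0); set u1 := x (Sum.inl 1); set u2 := x (Sum.inl 2)
      set v0 := x (Sum.inr 0); set v1 := x (Sum.inr 1); set v2 := x (Sum.inr 2)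
      set s := u0 * (y 1 * v2 - y 2 * v1) + u1 * (y 2 * v0 - y 0 * v2)
        + u2 * (y 0 * v1 - y 1 * v0) with hsdef
      have hcs : s^2 ≤ (u0^2+u1^2+u2^2) * ((y 1 * v2 - y 2 * v1)^2
          + (y 2 * v0 - y 0 * v2)^2 + (y 0 * v1 - y 1 * v0)^2) := cs3 _ _ _ _ _ _
      have hlag : (y 1 * v2 - y 2 * v1)^2 + (y 2 * v0 - y 0 * v2)^2
          + (y 0 * v1 - y 1 * v0)^2 ≤ v0^2 + v1^2 + v2^2 := by
        nlinarith [sq_nonneg (y 0 * v0 + y 1 * v1 + y 2 * v2)]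
      have hs2 : s^2 ≤ (u0^2+u1^2+u2^2) * (v0^2+v1^2+v2^2) :=
        le_trans hcs (mul_le_mul_of_nonneg_left hlag (by positivity))
      have hfin := key (c3 - lam) (c1 - lam) c2 s (u0^2+u1^2+u2^2) (v0^2+v1^2+v2^2)
        hp hq hpq hs2 (by positivity) (by positivity)
      linarith
  have hpd1 : (lam • (1 : Matrix (Fin 3 ⊕ Fin 3) (Fin 3 ⊕ Fin 3) ℝ)).PosDef := by
    rw [Matrix.posDef_iff_dotProduct_mulVec]
    constructor
    · simp [Matrix.IsHermitian]
    · intro x hx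
      have h6 : star x ⬝ᵥ (lam • (1:Matrix (Fin 3 ⊕ Fin 3) (Fin 3 ⊕ Fin 3) ℝ)) *ᵥ x
          = lam * (star x ⬝ᵥ x) := by
        simp [Matrix.smul_mulVec, dotProduct_smul, smul_eq_mul]
      rw [h6]
      exact mul_pos hlampos (Matrix.dotProduct_star_self_pos_iff.mpr hx)
  have hpd : M.PosDef := by
    have := hpd1.add_posSemidef hpsd
    rwa [add_sub_cancel] at this
  exact ⟨hlampos, hpsd, hpd⟩
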